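/- Let n ≥ 6 and let G be a graph maximizing the Q-spread s_Q among all connected graphs on n vertices. Then the number of edges of G satisfies |E(G)| > (n − 1)(n − 3)/2. -/

import Mathlib

/-- The adjacency matrix of a simple graph on `Fin n`, over `ℝ`. -/
noncomputable def adjMat {n : ℕ} (G : SimpleGraph (Fin n)) : Matrix (Fin n) (Fin n) ℝ :=
  letI : DecidableRel G.Adj := Classical.decRel _
  G.adjMatrix ℝ

/-- The set of eigenvalues of a real square matrix. -/
def eigSet {n : ℕ} (M : Matrix (Fin n) (Fin n) ℝ) : Set ℝ :=
  {mu : ℝ | ∃ x : Fin n → ℝ, x ≠ 0 ∧ M.mulVec x = mu • x}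

/-- The largest eigenvalue of a real square matrix. -/
noncomputable def lamMax {n : ℕ} (M : Matrix (Fin n) (Fin n) ℝ) : ℝ := sSup (eigSet M)

/-- The least eigenvalue of a real square matrix. -/
noncomputable def lamMin {n : ℕ} (M : Matrix (Fin n) (Fin n) ℝ) : ℝ := sInf (eigSet M)

/-- `λ₁(G)`: the largest adjacency eigenvalue of `G`. -/
noncomputable def lam1 {n : ℕ} (G : SimpleGraph (Fin n)) : ℝ := lamMax (adjMat G)

/-- The degree of a vertex. -/
noncomputable def deg {n : ℕ} (G : SimpleGraph (Fin n)) (v : Fin n) : ℕ :=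
  Nat.card {u : Fin n // G.Adj v u}

/-- The signless Laplacian `Q(G) = D(G) + A(G)`. -/
noncomputable def signlessLap {n : ℕ} (G : SimpleGraph (Fin n)) : Matrix (Fin n) (Fin n) ℝ :=
  Matrix.diagonal (fun v => (deg G v : ℝ)) + adjMat G

/-- `q₁(G)`: the largest signless Laplacian eigenvalue. -/
noncomputable def q1 {n : ℕ} (G : SimpleGraph (Fin n)) : ℝ := lamMax (signlessLap G)

/-- `qₙ(G)`: the least signless Laplacian eigenvalue. -/
noncomputable def qmin {n : ℕ} (G : SimpleGraph (Fin n)) : ℝ := lamMin (signlessLap G)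

/-- The `Q`-spread `s_Q(G) = q₁(G) - qₙ(G)`. -/
noncomputable def sQ {n : ℕ} (G : SimpleGraph (Fin n)) : ℝ := q1 G - qmin G

/-- The complete split graph `CS_{n,ω}`: a clique on the first `ω` vertices, completely
joined to an independent set on the remaining `n - ω` vertices. -/
def CS (n w : ℕ) : SimpleGraph (Fin n) where
  Adj u v := u ≠ v ∧ ((u : ℕ) < w ∨ (v : ℕ) < w)
  symm := by refine ⟨?_⟩; intro u v h; exact ⟨h.1.symm, h.2.symm⟩
  loopless := by refine ⟨?_⟩; intro u h; exact h.1 rfl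

/-- `K_{n-1}^+`: the complete graph on the first `n-1` vertices together with a pendant
vertex (the last vertex) joined to exactly one clique vertex (vertex `0`). -/
def KPlus (n : ℕ) : SimpleGraph (Fin n) where
  Adj u v := u ≠ v ∧ (((u : ℕ) < n - 1 ∧ (v : ℕ) < n - 1) ∨ (u : ℕ) = 0 ∨ (v : ℕ) = 0)
  symm := by refine ⟨?_⟩; intro u v h; refine ⟨h.1.symm, ?_⟩; tauto
  loopless := by refine ⟨?_⟩; intro u h; exact h.1 rfl

open Finset

section Basic
variable {n : ℕ} (G : SimpleGraph (Fin n))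

lemma deg_eq_degree [DecidableRel G.Adj] (v : Fin n) : deg G v = G.degree v := by
  rw [deg, Nat.card_eq_fintype_card, SimpleGraph.degree, SimpleGraph.neighborFinset_eq_filter]
  convert Fintype.card_subtype (fun u => G.Adj v u)

lemma slap_mulVec [DecidableRel G.Adj] (x : Fin n → ℝ) (v : Fin n) :
    (signlessLap G).mulVec x v
      = (G.degree v : ℝ) * x v + ∑ u ∈ G.neighborFinset v, x u := by
  rw [signlessLap, Matrix.add_mulVec, Pi.add_apply, Matrix.mulVec_diagonal, deg_eq_degree]
  congr 1
  have : adjMat G = G.adjMatrix ℝ := by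
    unfold adjMat
    congr!
  rw [this, SimpleGraph.adjMatrix_mulVec_apply]
end Basic

section Eig
variable {n : ℕ} {G : SimpleGraph (Fin n)}

lemma eig_bounds [DecidableRel G.Adj] {μ : ℝ} (hμ : μ ∈ eigSet (signlessLap G)) :
    0 ≤ μ ∧ μ ≤ 2 * ((n : ℝ) - 1) := by
  obtain ⟨x, hx0, hx⟩ := hμ
  obtain ⟨u0, hu0⟩ : ∃ u, x u ≠ 0 := by
    by_contra h; push_neg at h; exact hx0 (funext h)
  obtain ⟨v, -, hv⟩ := Finset.exists_max_image Finset.univ (fun u => |x u|)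
    ⟨u0, Finset.mem_univ u0⟩
  have hvpos : 0 < |x v| := lt_of_lt_of_le (abs_pos.2 hu0) (hv u0 (Finset.mem_univ u0))
  have heq : (G.degree v : ℝ) * x v + ∑ u ∈ G.neighborFinset v, x u = μ * x v := by
    rw [← slap_mulVec, hx]; rfl
  have habs : |μ - (G.degree v : ℝ)| * |x v| ≤ (G.degree v : ℝ) * |x v| := by
    have h1 : (μ - (G.degree v : ℝ)) * x v = ∑ u ∈ G.neighborFinset v, x u := by
      linarith [heq]
    calc |μ - (G.degree v : ℝ)| * |x v| = |∑ u ∈ G.neighborFinset v, x u| := by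
          rw [← abs_mul, h1]
      _ ≤ ∑ u ∈ G.neighborFinset v, |x u| := Finset.abs_sum_le_sum_abs _ _
      _ ≤ ∑ _u ∈ G.neighborFinset v, |x v| :=
          Finset.sum_le_sum (fun u _ => hv u (Finset.mem_univ u))
      _ = (G.degree v : ℝ) * |x v| := by
          rw [Finset.sum_const, SimpleGraph.card_neighborFinset_eq_degree]; ring
  have habs2 : |μ - (G.degree v : ℝ)| ≤ (G.degree v : ℝ) :=
    le_of_mul_le_mul_right (by linarith [habs]) hvpos
  have hdle : (G.degree v : ℝ) ≤ (n : ℝ) - 1 := by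
    have := G.degree_lt_card_verts v
    rw [Fintype.card_fin] at this
    have : (G.degree v : ℝ) + 1 ≤ n := by exact_mod_cast this
    linarith
  rw [abs_le] at habs2
  constructor <;> linarith [habs2.1, habs2.2]

lemma eig_merris [DecidableRel G.Adj] (hdeg : ∀ u, 0 < G.degree u) {μ : ℝ}
    (hμ : μ ∈ eigSet (signlessLap G)) :
    ∃ v : Fin n, μ * (G.degree v : ℝ) ≤ (G.degree v : ℝ)^2
      + ∑ u ∈ G.neighborFinset v, (G.degree u : ℝ) := by
  obtain ⟨x, hx0, hx⟩ := hμ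
  set z : Fin n → ℝ := fun u => x u / (G.degree u : ℝ) with hz
  obtain ⟨u0, hu0⟩ : ∃ u, x u ≠ 0 := by
    by_contra h; push_neg at h; exact hx0 (funext h)
  have hdne : ∀ u, (G.degree u : ℝ) ≠ 0 := fun u => by
    exact_mod_cast (hdeg u).ne'
  obtain ⟨v, -, hv⟩ := Finset.exists_max_image Finset.univ (fun u => |z u|)
    ⟨u0, Finset.mem_univ u0⟩
  refine ⟨v, ?_⟩
  have hzv : 0 < |z v| := by
    have : z u0 ≠ 0 := div_ne_zero hu0 (hdne u0)
    exact lt_of_lt_of_le (abs_pos.2 this) (hv u0 (Finset.mem_univ u0))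
  have hxu : ∀ u, x u = (G.degree u : ℝ) * z u := fun u => by
    rw [hz]; rw [mul_comm, div_mul_cancel₀ _ (hdne u)]
  have heq : (G.degree v : ℝ) * x v + ∑ u ∈ G.neighborFinset v, x u = μ * x v := by
    rw [← slap_mulVec, hx]; rfl
  have h1 : (μ - (G.degree v : ℝ)) * ((G.degree v : ℝ) * z v)
      = ∑ u ∈ G.neighborFinset v, (G.degree u : ℝ) * z u := by
    have hsum : ∑ u ∈ G.neighborFinset v, x u
        = ∑ u ∈ G.neighborFinset v, (G.degree u : ℝ) * z u :=
      Finset.sum_congr rfl (fun u _ => hxu u)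
    have := heq; rw [hsum, hxu v] at this; linarith
  have habs : |μ - (G.degree v : ℝ)| * ((G.degree v : ℝ) * |z v|)
      ≤ (∑ u ∈ G.neighborFinset v, (G.degree u : ℝ)) * |z v| := by
    calc |μ - (G.degree v : ℝ)| * ((G.degree v : ℝ) * |z v|)
        = |∑ u ∈ G.neighborFinset v, (G.degree u : ℝ) * z u| := by
          rw [← h1, abs_mul, abs_mul, abs_of_nonneg (by positivity : (0:ℝ) ≤ (G.degree v : ℝ))]
      _ ≤ ∑ u ∈ G.neighborFinset v, |(G.degree u : ℝ) * z u| := Finset.abs_sum_le_sum_abs _ _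
      _ ≤ ∑ u ∈ G.neighborFinset v, (G.degree u : ℝ) * |z v| := by
          refine Finset.sum_le_sum (fun u _ => ?_)
          rw [abs_mul, abs_of_nonneg (by positivity : (0:ℝ) ≤ (G.degree u : ℝ))]
          exact mul_le_mul_of_nonneg_left (hv u (Finset.mem_univ u)) (by positivity)
      _ = (∑ u ∈ G.neighborFinset v, (G.degree u : ℝ)) * |z v| := by
          rw [Finset.sum_mul]
  have hdvpos : (0:ℝ) < (G.degree v : ℝ) := by exact_mod_cast hdeg v
  have habs2 : |μ - (G.degree v : ℝ)| * (G.degree v : ℝ)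
      ≤ ∑ u ∈ G.neighborFinset v, (G.degree u : ℝ) := by
    have := habs
    rw [show |μ - (G.degree v : ℝ)| * ((G.degree v : ℝ) * |z v|)
        = |μ - (G.degree v : ℝ)| * (G.degree v : ℝ) * |z v| by ring] at this
    exact le_of_mul_le_mul_right this hzv
  have := le_abs_self (μ - (G.degree v : ℝ))
  nlinarith [habs2, hdvpos]
end Eig

section Sparse
variable {n : ℕ} {G : SimpleGraph (Fin n)}

lemma sum_nbr_deg [DecidableRel G.Adj] (hdeg : ∀ u, 0 < G.degree u) (v : Fin n) :
    ∑ u ∈ G.neighborFinset v, G.degree u + (n - 1) ≤ 2 * G.edgeFinset.card := by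
  have hsplit := Finset.sum_add_sum_compl (G.neighborFinset v) (fun u => G.degree u)
  rw [SimpleGraph.sum_degrees_eq_twice_card_edges] at hsplit
  have hvmem : v ∈ (G.neighborFinset v)ᶜ := by
    simp [SimpleGraph.notMem_neighborFinset_self]
  have hsum2 : ∑ u ∈ (G.neighborFinset v)ᶜ, G.degree u
      = G.degree v + ∑ u ∈ ((G.neighborFinset v)ᶜ).erase v, G.degree u := by
    exact (Finset.add_sum_erase _ _ hvmem).symm
  have hge : (((G.neighborFinset v)ᶜ).erase v).card
      ≤ ∑ u ∈ ((G.neighborFinset v)ᶜ).erase v, G.degree u := by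
    calc (((G.neighborFinset v)ᶜ).erase v).card
        = ∑ _u ∈ ((G.neighborFinset v)ᶜ).erase v, 1 := by simp
      _ ≤ _ := Finset.sum_le_sum (fun u _ => hdeg u)
  have hcard : ((G.neighborFinset v)ᶜ).card = n - G.degree v := by
    rw [Finset.card_compl, SimpleGraph.card_neighborFinset_eq_degree, Fintype.card_fin]
  have hcarde : (((G.neighborFinset v)ᶜ).erase v).card = n - G.degree v - 1 := by
    rw [Finset.card_erase_of_mem hvmem, hcard]
  have hdlt : G.degree v < n := by
    have := G.degree_lt_card_verts v; rwa [Fintype.card_fin] at this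
  have hdv := hdeg v
  omega

lemma degree_pos_of_connected (hn : 2 ≤ n) (hconn : G.Connected) (u : Fin n) :
    letI : DecidableRel G.Adj := Classical.decRel _
    0 < G.degree u := by
  letI : DecidableRel G.Adj := Classical.decRel _
  rw [SimpleGraph.degree_pos_iff_exists_adj]
  have h0 : (0 : ℕ) < n := by omega
  have h1 : (1 : ℕ) < n := by omega
  obtain ⟨w, hne⟩ : ∃ w : Fin n, u ≠ w := by
    rcases eq_or_ne u ⟨0, h0⟩ with h | h
    · refine ⟨⟨1, h1⟩, ?_⟩
      rw [h]; intro hc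
      have := congrArg Fin.val hc; simp at this
    · exact ⟨⟨0, h0⟩, h⟩
  obtain ⟨p⟩ := hconn.preconnected u w
  cases p with
  | nil => exact absurd rfl hne
  | cons h _ => exact ⟨_, h⟩

lemma sQ_le_of_sparse (hn : 6 ≤ n) (hconn : G.Connected)
    (hm : 2 * (Nat.card G.edgeSet) ≤ (n - 1) * (n - 3)) : sQ G ≤ 2 * (n : ℝ) - 5 := by
  letI : DecidableRel G.Adj := Classical.decRel _
  have hdeg : ∀ u, 0 < G.degree u := degree_pos_of_connected (by omega) hconn
  have hmcard : Nat.card G.edgeSet = G.edgeFinset.card := by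
    rw [Nat.card_eq_fintype_card]
    exact (Set.toFinset_card _).symm
  rw [hmcard] at hm
  have hq1 : q1 G ≤ 2 * (n : ℝ) - 5 := by
    apply Real.sSup_le _ (by linarith [show (6:ℝ) ≤ (n:ℝ) by exact_mod_cast hn])
    intro μ hμ
    obtain ⟨v, hμv⟩ := eig_merris hdeg hμ
    set d : ℝ := (G.degree v : ℝ) with hd
    have hd1 : 1 ≤ d := by rw [hd]; exact_mod_cast hdeg v
    have hdn : d ≤ (n : ℝ) - 1 := by
      have := G.degree_lt_card_verts v; rw [Fintype.card_fin] at this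
      have : d + 1 ≤ (n:ℝ) := by rw [hd]; exact_mod_cast this
      linarith
    set S : ℝ := ∑ u ∈ G.neighborFinset v, (G.degree u : ℝ) with hS
    have hS1 : S ≤ ((n:ℝ) - 1) * d := by
      calc S ≤ ∑ _u ∈ G.neighborFinset v, ((n:ℝ) - 1) := by
            refine Finset.sum_le_sum (fun u _ => ?_)
            have := G.degree_lt_card_verts u; rw [Fintype.card_fin] at this
            have : (G.degree u : ℝ) + 1 ≤ (n:ℝ) := by exact_mod_cast this
            linarith
        _ = ((n:ℝ) - 1) * d := by
            rw [Finset.sum_const, SimpleGraph.card_neighborFinset_eq_degree]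
            rw [hd]; ring
    have hS2 : S ≤ ((n:ℝ) - 1) * ((n:ℝ) - 4) := by
      have h1 := sum_nbr_deg hdeg v
      have h2 : ∑ u ∈ G.neighborFinset v, G.degree u + (n-1) ≤ (n-1)*(n-3) := le_trans h1 hm
      have h3 : (∑ u ∈ G.neighborFinset v, G.degree u : ℝ) + ((n:ℝ)-1) ≤ ((n:ℝ)-1)*((n:ℝ)-3) := by
        have hc : ((∑ u ∈ G.neighborFinset v, G.degree u + (n-1) : ℕ) : ℝ)
            ≤ (((n-1)*(n-3) : ℕ) : ℝ) := by exact_mod_cast h2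
        push_cast [Nat.cast_sub (show 1 ≤ n by omega), Nat.cast_sub (show 3 ≤ n by omega)] at hc
        linarith [hc]
      have hSc : S = (∑ u ∈ G.neighborFinset v, G.degree u : ℝ) := by rw [hS]
      rw [hSc]; nlinarith [h3]
    have hnn : (6:ℝ) ≤ (n:ℝ) := by exact_mod_cast hn
    rcases le_or_gt d ((n:ℝ) - 4) with hcase | hcase
    · nlinarith [hμv, hS1, hd1]
    · nlinarith [hμv, hS2, hd1, hdn, mul_nonneg (sub_nonneg.2 hcase.le) (sub_nonneg.2 hdn)]
  have hqmin : 0 ≤ qmin G := Real.sInf_nonneg (fun μ hμ => (eig_bounds hμ).1)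
  rw [sQ]; unfold q1 qmin lamMax lamMin at *
  linarith
end Sparse

lemma kplus_adj {n : ℕ} (u v : Fin n) :
    (KPlus n).Adj u v ↔ u ≠ v ∧ (((u : ℕ) < n - 1 ∧ (v : ℕ) < n - 1) ∨ (u : ℕ) = 0 ∨ (v : ℕ) = 0) :=
  Iff.rfl

lemma card_filter_val_lt {n k : ℕ} (hk : k ≤ n) :
    (Finset.univ.filter (fun u : Fin n => (u : ℕ) < k)).card = k := by
  have h := Finset.card_bij' (s := Finset.univ.filter (fun u : Fin n => (u : ℕ) < k)) (t := Finset.range k) (fun u _ => (u : ℕ))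
    (fun m hm => (⟨m, lt_of_lt_of_le (Finset.mem_range.1 hm) hk⟩ : Fin n))
    (fun u hu => Finset.mem_range.2 (Finset.mem_filter.1 hu).2)
    (fun m hm => Finset.mem_filter.2 ⟨Finset.mem_univ _, Finset.mem_range.1 hm⟩)
    (fun u _ => rfl) (fun m _ => rfl)
  rw [h, Finset.card_range]

lemma kplus_connected {n : ℕ} (hn : 2 ≤ n) : (KPlus n).Connected := by
  have h0 : 0 < n := by omega
  set v0 : Fin n := ⟨0, h0⟩ with hv0
  have hadj : ∀ u : Fin n, u ≠ v0 → (KPlus n).Adj u v0 := by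
    intro u hu
    exact ⟨hu, Or.inr (Or.inr rfl)⟩
  have hreach : ∀ u : Fin n, (KPlus n).Reachable u v0 := by
    intro u
    rcases eq_or_ne u v0 with h | h
    · rw [h]
    · exact (hadj u h).reachable
  haveI : Nonempty (Fin n) := ⟨v0⟩
  exact ⟨fun u w => (hreach u).trans (hreach w).symm⟩
section KP
variable {n : ℕ}

lemma kplus_mem_eig (hn : 6 ≤ n) (r : ℝ)
    (hr : r ^ 2 = (2 * (n:ℝ) - 3) * r - (2 * (n:ℝ) - 6)) (hr1 : r - 1 ≠ 0) :
    r ∈ eigSet (signlessLap (KPlus n)) := by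
  letI : DecidableRel (KPlus n).Adj := Classical.decRel _
  have h0 : 0 < n := by omega
  have h1 : 1 < n := by omega
  set v0 : Fin n := ⟨0, h0⟩ with hv0def
  set vl : Fin n := ⟨n - 1, by omega⟩ with hvldef
  set v1 : Fin n := ⟨1, h1⟩ with hv1def
  have e0 : (v0 : ℕ) = 0 := rfl
  have el : (vl : ℕ) = n - 1 := rfl
  have e1 : (v1 : ℕ) = 1 := rfl
  have hv0l : v0 ≠ vl := by
    simp only [ne_eq, Fin.ext_iff, e0, el]; omega
  set a : ℝ := (r - (2 * (n:ℝ) - 5)) * (r - 1) with ha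
  set c : ℝ := r - (2 * (n:ℝ) - 5) with hc
  set b : ℝ := r - 1 with hb
  set x : Fin n → ℝ := fun u => if u = v0 then a else if u = vl then c else b with hx
  have hsum : ∀ s : Finset (Fin n), ∑ u ∈ s, x u
      = b * s.card + (if v0 ∈ s then a - b else 0) + (if vl ∈ s then c - b else 0) := by
    intro s
    have hpt : ∀ u : Fin n, x u
        = b + ((if u = v0 then a - b else 0) + (if u = vl then c - b else 0)) := by
      intro u
      simp only [hx]
      rcases eq_or_ne u v0 with h | h
      · rw [if_pos h, if_pos h, if_neg (h ▸ hv0l), add_zero]; ring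
      · rw [if_neg h, if_neg h, zero_add]
        rcases eq_or_ne u vl with h2 | h2
        · rw [if_pos h2, if_pos h2]; ring
        · rw [if_neg h2, if_neg h2]; ring
    rw [Finset.sum_congr rfl (fun u _ => hpt u), Finset.sum_add_distrib,
      Finset.sum_add_distrib, Finset.sum_const, Finset.sum_ite_eq' s v0,
      Finset.sum_ite_eq' s vl, nsmul_eq_mul, mul_comm (s.card : ℝ) b]
    ring
  refine ⟨x, ?_, ?_⟩
  · intro h
    apply hr1
    have hne1 : v1 ≠ v0 := by simp only [ne_eq, Fin.ext_iff, e0, e1]; omega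
    have hne2 : v1 ≠ vl := by simp only [ne_eq, Fin.ext_iff, el, e1]; omega
    have := congrFun h v1
    simp only [hx, if_neg hne1, if_neg hne2, Pi.zero_apply] at this
    rw [hb] at this; exact this
  · have hN0 : (KPlus n).neighborFinset v0 = Finset.univ.erase v0 := by
      rw [SimpleGraph.neighborFinset_eq_filter]
      ext u
      simp only [Finset.mem_filter, Finset.mem_univ, true_and, Finset.mem_erase, kplus_adj,
        ne_eq, Fin.ext_iff, e0, true_and, and_true, true_or, or_true]
      omega
    have hNl : (KPlus n).neighborFinset vl = {v0} := by
      rw [SimpleGraph.neighborFinset_eq_filter]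
      ext u
      have h3 := u.isLt
      simp only [Finset.mem_filter, Finset.mem_univ, true_and, Finset.mem_singleton, kplus_adj,
        ne_eq, Fin.ext_iff, e0, el, true_and, and_true, true_or, or_true]
      omega
    have hNc : ∀ v : Fin n, v ≠ v0 → v ≠ vl →
        (KPlus n).neighborFinset v
          = (Finset.univ.filter (fun u : Fin n => (u : ℕ) < n - 1)).erase v := by
      intro v hvv0 hvvl
      rw [SimpleGraph.neighborFinset_eq_filter]
      ext u
      have h1 : (v : ℕ) ≠ 0 := by
        intro h; exact hvv0 (by rw [Fin.ext_iff, e0, h])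
      have h2 : (v : ℕ) ≠ n - 1 := by
        intro h; exact hvvl (by rw [Fin.ext_iff, el, h])
      have h3 := v.isLt
      have h4 := u.isLt
      simp only [Finset.mem_filter, Finset.mem_univ, true_and, Finset.mem_erase, kplus_adj,
        ne_eq, Fin.ext_iff]
      omega
    funext v
    rw [slap_mulVec, Pi.smul_apply, smul_eq_mul]
    have hnR : (6:ℝ) ≤ (n:ℝ) := by exact_mod_cast hn
    rcases eq_or_ne v v0 with hv | hv
    · subst hv
      rw [hN0, hsum]
      have hcard : (Finset.univ.erase v0).card = n - 1 := by
        rw [Finset.card_erase_of_mem (Finset.mem_univ _), Finset.card_univ, Fintype.card_fin]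
      have hdeg : (KPlus n).degree v0 = n - 1 := by
        rw [← SimpleGraph.card_neighborFinset_eq_degree, hN0, hcard]
      rw [hcard, hdeg, if_neg (Finset.notMem_erase v0 _),
        if_pos (Finset.mem_erase.2 ⟨hv0l.symm, Finset.mem_univ _⟩)]
      have hxv0 : x v0 = a := by simp only [hx, if_pos rfl]
      rw [hxv0]
      have hcast : ((n - 1 : ℕ) : ℝ) = (n : ℝ) - 1 := by
        rw [Nat.cast_sub (by omega)]; norm_num
      rw [hcast, ha, hb, hc]
      linear_combination (-(r - ((n:ℝ) - 2))) * hr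
    · rcases eq_or_ne v vl with hv2 | hv2
      · subst hv2
        rw [hNl, hsum]
        have hdeg : (KPlus n).degree vl = 1 := by
          rw [← SimpleGraph.card_neighborFinset_eq_degree, hNl, Finset.card_singleton]
        rw [hdeg, Finset.card_singleton, if_pos (Finset.mem_singleton_self v0),
          if_neg (by rw [Finset.mem_singleton]; exact fun h => hv0l (h.symm))]
        have hxvl : x vl = c := by simp [hx, Ne.symm hv0l]
        rw [hxvl, ha, hb, hc]; push_cast; ring
      · rw [hNc v hv hv2, hsum]
        have hvmem : v ∈ Finset.univ.filter (fun u : Fin n => (u : ℕ) < n - 1) := by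
          refine Finset.mem_filter.2 ⟨Finset.mem_univ _, ?_⟩
          have h3 := v.isLt
          have h2 : (v : ℕ) ≠ n - 1 := by
            intro h; exact hv2 (by rw [Fin.ext_iff, el, h])
          omega
        have hcard : ((Finset.univ.filter (fun u : Fin n => (u : ℕ) < n - 1)).erase v).card
            = n - 2 := by
          rw [Finset.card_erase_of_mem hvmem, card_filter_val_lt (by omega)]
          omega
        have hdeg : (KPlus n).degree v = n - 2 := by
          rw [← SimpleGraph.card_neighborFinset_eq_degree, hNc v hv hv2, hcard]
        have hmem0 : v0 ∈ (Finset.univ.filter (fun u : Fin n => (u : ℕ) < n - 1)).erase v := by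
          refine Finset.mem_erase.2 ⟨fun h => hv (h.symm ▸ rfl), Finset.mem_filter.2
            ⟨Finset.mem_univ _, by rw [e0]; omega⟩⟩
        have hmeml : vl ∉ (Finset.univ.filter (fun u : Fin n => (u : ℕ) < n - 1)).erase v := by
          intro h
          have := (Finset.mem_filter.1 (Finset.mem_erase.1 h).2).2
          rw [el] at this
          omega
        rw [hdeg, hcard, if_pos hmem0, if_neg hmeml]
        have hxv : x v = b := by simp only [hx, if_neg hv, if_neg hv2]
        rw [hxv]
        have hcast : ((n - 2 : ℕ) : ℝ) = (n : ℝ) - 2 := by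
          rw [Nat.cast_sub (by omega)]; norm_num
        rw [hcast, ha, hb, hc]; ring

lemma kplus_sQ {n : ℕ} (hn : 6 ≤ n) : 2 * (n:ℝ) - 5 < sQ (KPlus n) := by
  letI : DecidableRel (KPlus n).Adj := Classical.decRel _
  have hnR : (6:ℝ) ≤ (n:ℝ) := by exact_mod_cast hn
  set D : ℝ := 4*(n:ℝ)^2 - 20*(n:ℝ) + 33 with hDdef
  have hD0 : 0 ≤ D := by rw [hDdef]; nlinarith
  have hs2 : Real.sqrt D ^ 2 = D := Real.sq_sqrt hD0
  have hs0 : 0 ≤ Real.sqrt D := Real.sqrt_nonneg D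
  have hsgt : 2*(n:ℝ) - 5 < Real.sqrt D := by
    refine (Real.lt_sqrt (by linarith)).2 ?_
    rw [hDdef]; nlinarith
  set rp : ℝ := ((2*(n:ℝ)-3) + Real.sqrt D)/2 with hrpdef
  set rm : ℝ := ((2*(n:ℝ)-3) - Real.sqrt D)/2 with hrmdef
  have hrp : rp ^ 2 = (2*(n:ℝ)-3)*rp - (2*(n:ℝ)-6) := by
    rw [hrpdef]; linear_combination (1/4) * hs2
  have hrm : rm ^ 2 = (2*(n:ℝ)-3)*rm - (2*(n:ℝ)-6) := by
    rw [hrmdef]; linear_combination (1/4) * hs2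
  have hrp1 : rp - 1 ≠ 0 := by
    have : 0 < rp - 1 := by rw [hrpdef]; linarith
    exact ne_of_gt this
  have hrm1 : rm - 1 ≠ 0 := by
    have : rm - 1 < 0 := by rw [hrmdef]; linarith
    exact ne_of_lt this
  have hmp := kplus_mem_eig hn rp hrp hrp1
  have hmm := kplus_mem_eig hn rm hrm hrm1
  have hbddA : BddAbove (eigSet (signlessLap (KPlus n))) :=
    ⟨2*((n:ℝ)-1), fun μ hμ => (eig_bounds hμ).2⟩
  have hbddB : BddBelow (eigSet (signlessLap (KPlus n))) :=
    ⟨0, fun μ hμ => (eig_bounds hμ).1⟩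
  have h1 : rp ≤ q1 (KPlus n) := le_csSup hbddA hmp
  have h2 : qmin (KPlus n) ≤ rm := csInf_le hbddB hmm
  have hdiff : rp - rm = Real.sqrt D := by rw [hrpdef, hrmdef]; ring
  rw [sQ]; linarith

theorem stmt11 (n : ℕ) (hn : 6 ≤ n) (G : SimpleGraph (Fin n)) (hconn : G.Connected)
    (hmax : ∀ H : SimpleGraph (Fin n), H.Connected → sQ H ≤ sQ G) :
    ((n : ℝ) - 1) * ((n : ℝ) - 3) / 2 < (Nat.card G.edgeSet : ℝ) := by
  by_contra hcon
  push_neg at hcon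
  have hm : 2 * Nat.card G.edgeSet ≤ (n - 1) * (n - 3) := by
    have h2 : (2 * Nat.card G.edgeSet : ℝ) ≤ (((n - 1) * (n - 3) : ℕ) : ℝ) := by
      push_cast [Nat.cast_sub (show 1 ≤ n by omega), Nat.cast_sub (show 3 ≤ n by omega)]
      linarith
    exact_mod_cast h2
  have hle := sQ_le_of_sparse hn hconn hm
  have hKP := kplus_sQ (n := n) hn
  have hcmp := hmax (KPlus n) (kplus_connected (by omega))
  linarith
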